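/- Let c¹,…,cⁿ be a lattice basis of ℤⁿ, let S ⊆ K_C be a nonempty compact set, and let x̄ be the lexicographically minimum point of S with respect to ⪯_C. Suppose x̄ ∉ ℤⁿ, and let k be the smallest index with c^k·x̄ ∉ ℤ. Then the inequality ∑_{i=1}^k d̂^k_i (c^i·x) ≥ ∑_{i=1}^{k−1} d̂^k_i (c^i·x̄) + ⌈c^k·x̄⌉, where d̂^k_k := 1, d̂^k_{k−1} := ⌈c^k·x̄⌉, and d̂^k_i := ⌈c^k·x̄⌉·∏_{j=i+1}^{k−1}(c^j·x̄ + 1) for i ≤ k−2, is a cutting plane: it is satisfied by every x ∈ S ∩ ℤⁿ and violated by x̄. -/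

import Mathlib

/-- `x` is an integer point. -/
def isInt {n : ℕ} (x : Fin n → ℝ) : Prop := ∀ i, ∃ z : ℤ, x i = (z : ℝ)

/-- Dot product of an integer vector with a real vector. -/
def rdot {n : ℕ} (c : Fin n → ℤ) (x : Fin n → ℝ) : ℝ := ∑ j, (c j : ℝ) * x j

/-- Lexicographic strict order associated with the lattice basis given by the rows of `C`. -/
def lexLtC {n : ℕ} (C : Matrix (Fin n) (Fin n) ℤ) (x y : Fin n → ℝ) : Prop :=
  ∃ i : Fin n, rdot (C i) x < rdot (C i) y ∧ ∀ j : Fin n, j < i → rdot (C j) x = rdot (C j) y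

/-- `x ⪯_C y` iff `x ≺_C y` or `x = y`. -/
def lexLeC {n : ℕ} (C : Matrix (Fin n) (Fin n) ℤ) (x y : Fin n → ℝ) : Prop :=
  lexLtC C x y ∨ x = y

/-- The cutting-plane coefficients `d̂^k_i`: `d̂^k_k = 1`, `d̂^k_{k-1} = ⌈cᵏ·x̄⌉`, and
`d̂^k_i = ⌈cᵏ·x̄⌉·∏_{j=i+1}^{k-1}(cʲ·x̄ + 1)` for `i ≤ k-2`. -/
noncomputable def dhat {n : ℕ} (C : Matrix (Fin n) (Fin n) ℤ) (xb : Fin n → ℝ)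
    (k i : Fin n) : ℝ :=
  if i = k then 1 else (⌈rdot (C k) xb⌉ : ℝ) * ∏ j ∈ Finset.Ioo i k, (rdot (C j) xb + 1)

lemma rdot_int {n : ℕ} (c : Fin n → ℤ) (x : Fin n → ℝ) (hx : isInt x) :
    ∃ z : ℤ, rdot c x = (z : ℝ) := by
  refine ⟨∑ j, c j * (hx j).choose, ?_⟩
  rw [rdot]
  push_cast
  exact Finset.sum_congr rfl fun j _ => congrArg (fun t => (c j : ℝ) * t) (hx j).choose_spec

lemma prod_key {n : ℕ} (f : Fin n → ℝ) (T : Finset (Fin n)) :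
    ∏ j ∈ T, (f j + 1) = 1 + ∑ j ∈ T, f j * ∏ l ∈ T.filter (j < ·), (f l + 1) := by
  induction T using Finset.induction_on_min with
  | empty => simp
  | insert a s ha ih =>
      have has : a ∉ s := fun h => lt_irrefl a (ha a h)
      rw [Finset.prod_insert has, Finset.sum_insert has, ih]
      have h1 : (insert a s).filter (a < ·) = s := by
        ext x
        simp only [Finset.mem_filter, Finset.mem_insert]
        constructor
        · rintro ⟨h | h, hlt⟩
          · exact absurd hlt (by simp [h])
          · exact h
        · exact fun h => ⟨Or.inr h, ha x h⟩
      have h2 : ∀ j ∈ s, (insert a s).filter (j < ·) = s.filter (j < ·) := by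
        intro j hj
        ext x
        simp only [Finset.mem_filter, Finset.mem_insert]
        constructor
        · rintro ⟨h | h, hlt⟩
          · exact absurd hlt (h ▸ not_lt.2 (ha j hj).le)
          · exact ⟨h, hlt⟩
        · exact fun ⟨h, hlt⟩ => ⟨Or.inr h, hlt⟩
      have h3 : ∑ j ∈ s, f j * ∏ l ∈ (insert a s).filter (j < ·), (f l + 1)
          = ∑ j ∈ s, f j * ∏ l ∈ s.filter (j < ·), (f l + 1) :=
        Finset.sum_congr rfl fun j hj => by rw [h2 j hj]
      rw [h1, h3, ih]
      ring

/-- Let `c¹,…,cⁿ` (rows of a unimodular `C`) be a lattice basis of `ℤⁿ`, `S ⊆ K_C`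
nonempty compact, `x̄` the lex-min point of `S`, `x̄ ∉ ℤⁿ`, and `k` the smallest index
with `cᵏ·x̄ ∉ ℤ`. Then the inequality
`∑_{i≤k} d̂^k_i (cⁱ·x) ≥ ∑_{i<k} d̂^k_i (cⁱ·x̄) + ⌈cᵏ·x̄⌉`
is satisfied by every integer point of `S` and violated by `x̄`: it is a cutting plane. -/
theorem stmt11 {n : ℕ} (C : Matrix (Fin n) (Fin n) ℤ) (hC : C.det = 1 ∨ C.det = -1)
    (S : Set (Fin n → ℝ)) (hSK : ∀ x ∈ S, ∀ i, 0 ≤ rdot (C i) x)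
    (hne : S.Nonempty) (hcomp : IsCompact S)
    (xb : Fin n → ℝ) (hmem : xb ∈ S) (hlex : ∀ x ∈ S, lexLeC C xb x)
    (hnotint : ¬ isInt xb)
    (k : Fin n) (hk : ¬ ∃ z : ℤ, rdot (C k) xb = (z : ℝ))
    (hmin : ∀ j : Fin n, j < k → ∃ z : ℤ, rdot (C j) xb = (z : ℝ)) :
    (∀ x ∈ S, isInt x →
      ∑ i ∈ Finset.Iic k, dhat C xb k i * rdot (C i) x ≥
        ∑ i ∈ Finset.Iio k, dhat C xb k i * rdot (C i) xb + (⌈rdot (C k) xb⌉ : ℝ)) ∧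
    ∑ i ∈ Finset.Iic k, dhat C xb k i * rdot (C i) xb <
      ∑ i ∈ Finset.Iio k, dhat C xb k i * rdot (C i) xb + (⌈rdot (C k) xb⌉ : ℝ) := by
  have hbnn : ∀ j, 0 ≤ rdot (C j) xb := hSK xb hmem
  have hbklt : rdot (C k) xb < ((⌈rdot (C k) xb⌉ : ℤ) : ℝ) :=
    lt_of_le_of_ne (Int.le_ceil _) fun h => hk ⟨_, h⟩
  have hbk_pos : (0:ℝ) < rdot (C k) xb := by
    rcases lt_or_eq_of_le (hbnn k) with h | h
    · exact h
    · exact absurd ⟨0, by simpa using h.symm⟩ hk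
  have hm1 : (1:ℝ) ≤ ((⌈rdot (C k) xb⌉ : ℤ) : ℝ) := by
    have : 0 < ⌈rdot (C k) xb⌉ := Int.ceil_pos.mpr hbk_pos
    exact_mod_cast this
  have hdk : dhat C xb k k = 1 := by simp [dhat]
  have hdne : ∀ i : Fin n, i ≠ k → dhat C xb k i =
      ((⌈rdot (C k) xb⌉ : ℤ) : ℝ) * ∏ l ∈ Finset.Ioo i k, (rdot (C l) xb + 1) := by
    intro i hi
    simp [dhat, hi]
  have hdpos : ∀ i, 0 < dhat C xb k i := by
    intro i
    by_cases hi : i = k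
    · rw [hi, hdk]; norm_num
    · rw [hdne i hi]
      refine mul_pos (by linarith) (Finset.prod_pos fun j hj => by linarith [hbnn j])
  -- key telescoping identity
  have hkey : ∀ i : Fin n, i < k →
      dhat C xb k i = ∑ j ∈ Finset.Ioo i k, dhat C xb k j * rdot (C j) xb
        + ((⌈rdot (C k) xb⌉ : ℤ) : ℝ) := by
    intro i hik
    have hfil : ∀ j ∈ Finset.Ioo i k,
        (Finset.Ioo i k).filter (j < ·) = Finset.Ioo j k := by
      intro j hj
      rw [Finset.mem_Ioo] at hj
      ext x
      simp only [Finset.mem_filter, Finset.mem_Ioo]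
      exact ⟨fun ⟨⟨_, h2⟩, h3⟩ => ⟨h3, h2⟩, fun ⟨h3, h2⟩ => ⟨⟨hj.1.trans h3, h2⟩, h3⟩⟩
    have hrhs : ∑ j ∈ Finset.Ioo i k, dhat C xb k j * rdot (C j) xb
        = ((⌈rdot (C k) xb⌉ : ℤ) : ℝ) * ∑ j ∈ Finset.Ioo i k, rdot (C j) xb *
            ∏ l ∈ (Finset.Ioo i k).filter (j < ·), (rdot (C l) xb + 1) := by
      rw [Finset.mul_sum]
      refine Finset.sum_congr rfl fun j hj => ?_
      rw [hdne j (ne_of_lt (Finset.mem_Ioo.mp hj).2), hfil j hj]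
      ring
    rw [hdne i (ne_of_lt hik), prod_key (fun l => rdot (C l) xb) (Finset.Ioo i k), hrhs]
    ring
  constructor
  · -- validity
    intro x hxS hxint
    have hBnn : ∀ j, 0 ≤ rdot (C j) x := hSK x hxS
    have hBint : ∀ j, ∃ z : ℤ, rdot (C j) x = (z : ℝ) := fun j => rdot_int (C j) x hxint
    have hlt : lexLtC C xb x := by
      rcases hlex x hxS with h | h
      · exact h
      · exact absurd (h ▸ hBint k) hk
    obtain ⟨i, hilt, hieq⟩ := hlt
    have hik : i ≤ k := by
      by_contra h
      push_neg at h
      exact hk ((hieq k h) ▸ hBint k)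
    have step1 : ∑ j ∈ Finset.Iic i, dhat C xb k j * rdot (C j) x ≤
        ∑ j ∈ Finset.Iic k, dhat C xb k j * rdot (C j) x :=
      Finset.sum_le_sum_of_subset_of_nonneg (Finset.Iic_subset_Iic.mpr hik)
        (fun j _ _ => mul_nonneg (hdpos j).le (hBnn j))
    have e1 : ∑ j ∈ Finset.Iic i, dhat C xb k j * rdot (C j) x =
        ∑ j ∈ Finset.Iio i, dhat C xb k j * rdot (C j) xb + dhat C xb k i * rdot (C i) x := by
      rw [← Finset.Iio_insert, Finset.sum_insert (by simp)]
      have : ∑ j ∈ Finset.Iio i, dhat C xb k j * rdot (C j) x =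
          ∑ j ∈ Finset.Iio i, dhat C xb k j * rdot (C j) xb :=
        Finset.sum_congr rfl fun j hj => by rw [← hieq j (Finset.mem_Iio.mp hj)]
      rw [this]
      ring
    have e2 : ∑ j ∈ Finset.Iio k, dhat C xb k j * rdot (C j) xb =
        ∑ j ∈ Finset.Iio i, dhat C xb k j * rdot (C j) xb
          + ∑ j ∈ Finset.Ico i k, dhat C xb k j * rdot (C j) xb := by
      rw [← Finset.sum_union (by
        simp only [Finset.disjoint_left, Finset.mem_Iio, Finset.mem_Ico]
        exact fun a ha hb => absurd hb.1 (not_le.mpr ha))]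
      congr 1
      ext y
      simp only [Finset.mem_union, Finset.mem_Iio, Finset.mem_Ico]
      constructor
      · intro h
        rcases lt_or_ge y i with h2 | h2
        · exact Or.inl h2
        · exact Or.inr ⟨h2, h⟩
      · rintro (h | h)
        · exact lt_of_lt_of_le h hik
        · exact h.2
    have main : dhat C xb k i * rdot (C i) x ≥
        ∑ j ∈ Finset.Ico i k, dhat C xb k j * rdot (C j) xb
          + ((⌈rdot (C k) xb⌉ : ℤ) : ℝ) := by
      rcases eq_or_lt_of_le hik with rfl | hik2
      · simp only [Finset.Ico_self, Finset.sum_empty, hdk, one_mul, zero_add]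
        obtain ⟨w, hw⟩ := hBint i
        have h1 : rdot (C i) xb < rdot (C i) x := hilt
        rw [hw] at h1 ⊢
        exact_mod_cast Int.ceil_le.mpr h1.le
      · have hsplit : Finset.Ico i k = insert i (Finset.Ioo i k) := by
          ext y
          simp only [Finset.mem_Ico, Finset.mem_insert, Finset.mem_Ioo]
          constructor
          · rintro ⟨h1, h2⟩
            rcases eq_or_lt_of_le h1 with h | h
            · exact Or.inl h.symm
            · exact Or.inr ⟨h, h2⟩
          · rintro (rfl | ⟨h1, h2⟩)
            · exact ⟨le_refl _, hik2⟩
            · exact ⟨h1.le, h2⟩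
        rw [hsplit, Finset.sum_insert (by simp)]
        have hkeyi := hkey i hik2
        have hstep : rdot (C i) xb + 1 ≤ rdot (C i) x := by
          obtain ⟨z, hz⟩ := hmin i hik2
          obtain ⟨w, hw⟩ := hBint i
          have h1 : rdot (C i) xb < rdot (C i) x := hilt
          rw [hz, hw] at h1 ⊢
          have hzw : z < w := by exact_mod_cast h1
          exact_mod_cast Int.add_one_le_iff.mpr hzw
        nlinarith [hdpos i]
    calc ∑ j ∈ Finset.Iio k, dhat C xb k j * rdot (C j) xb + ((⌈rdot (C k) xb⌉ : ℤ) : ℝ)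
        = ∑ j ∈ Finset.Iio i, dhat C xb k j * rdot (C j) xb +
          (∑ j ∈ Finset.Ico i k, dhat C xb k j * rdot (C j) xb
            + ((⌈rdot (C k) xb⌉ : ℤ) : ℝ)) := by rw [e2]; ring
      _ ≤ ∑ j ∈ Finset.Iio i, dhat C xb k j * rdot (C j) xb
            + dhat C xb k i * rdot (C i) x := by linarith [main]
      _ = ∑ j ∈ Finset.Iic i, dhat C xb k j * rdot (C j) x := e1.symm
      _ ≤ ∑ j ∈ Finset.Iic k, dhat C xb k j * rdot (C j) x := step1
  · -- violation
    rw [← Finset.Iio_insert, Finset.sum_insert (by simp), hdk]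
    linarith
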